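/- The improper integral ∫_{-∞}^{0} (π/2 + arctan(s))² ds equals π ln 2. -/

import Mathlib

open MeasureTheory Real Set Filter Topology intervalIntegral

lemma my_arctan_nonneg {x : ℝ} (hx : 0 ≤ x) : 0 ≤ Real.arctan x := by
  have := Real.arctan_strictMono.monotone hx
  simpa using this

/-! ### Integrability of `log ∘ sin` near 0 -/

lemma logsin_integrableOn : IntegrableOn (fun x => Real.log (Real.sin x)) (Set.Ioc 0 (π/2)) := by
  have hpi : (1:ℝ) ≤ π / 2 := by nlinarith [pi_gt_three]
  have hlog : IntegrableOn (fun x => -Real.log x) (Set.Ioc (0:ℝ) 1) := by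
    apply intervalIntegral.integrableOn_deriv_of_nonneg (g := fun x => x - x * Real.log x)
    · exact (continuous_id.sub Real.continuous_mul_log).continuousOn
    · intro x hx
      have := ((hasDerivAt_id x).sub (Real.hasDerivAt_mul_log hx.1.ne'))
      refine this.congr_deriv ?_; ring
    · intro x hx
      simp only [neg_nonneg]
      exact Real.log_nonpos hx.1.le hx.2.le
  have h1 : IntegrableOn (fun x => Real.log (Real.sin x)) (Set.Ioc (0:ℝ) 1) := by
    have hmaj : IntegrableOn (fun x => Real.log 2 + -Real.log x) (Set.Ioc (0:ℝ) 1) := by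
      have hc := (integrableOn_const (by simp : volume (Set.Ioc (0:ℝ) 1) ≠ ⊤)
        : IntegrableOn (fun _ : ℝ => Real.log 2) (Set.Ioc (0:ℝ) 1) volume)
      exact hc.add hlog
    refine Integrable.mono' hmaj ?_ ?_
    · exact (Real.measurable_log.comp Real.continuous_sin.measurable).aestronglyMeasurable
    · filter_upwards [ae_restrict_mem measurableSet_Ioc] with x hx
      have hx0 : 0 < x := hx.1
      have hx1 : x ≤ 1 := hx.2
      have hsin : x / 2 ≤ Real.sin x := by
        have h := Real.sin_gt_sub_cube hx0
        have hx2 : x^2 ≤ 1 := by nlinarith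
        nlinarith
      have hs0 : 0 < Real.sin x := lt_of_lt_of_le (by linarith) hsin
      have hs1 : Real.sin x ≤ 1 := Real.sin_le_one x
      have hlog0 : Real.log (Real.sin x) ≤ 0 := Real.log_nonpos hs0.le hs1
      rw [Real.norm_eq_abs, abs_of_nonpos hlog0]
      have : Real.log (x / 2) ≤ Real.log (Real.sin x) :=
        Real.log_le_log (by linarith) hsin
      rw [Real.log_div hx0.ne' (by norm_num)] at this
      linarith
  have h2 : IntegrableOn (fun x => Real.log (Real.sin x)) (Set.Ioc (1:ℝ) (π/2)) := by
    have hcont : ContinuousOn (fun x => Real.log (Real.sin x)) (Set.Icc (1:ℝ) (π/2)) := by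
      apply ContinuousOn.log Real.continuous_sin.continuousOn
      intro x hx
      have : 0 < Real.sin x :=
        Real.sin_pos_of_pos_of_lt_pi (by linarith [hx.1]) (by nlinarith [hx.2, pi_pos])
      exact this.ne'
    exact (hcont.integrableOn_Icc).mono_set Set.Ioc_subset_Icc_self
  have : Set.Ioc (0:ℝ) (π/2) = Set.Ioc 0 1 ∪ Set.Ioc 1 (π/2) :=
    (Set.Ioc_union_Ioc_eq_Ioc (by norm_num) hpi).symm
  rw [this]
  exact h1.union h2

lemma ii_logsin : IntervalIntegrable (fun x => Real.log (Real.sin x)) volume 0 (π/2) :=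
  (intervalIntegrable_iff_integrableOn_Ioc_of_le (by positivity)).mpr logsin_integrableOn

lemma ii_logcos : IntervalIntegrable (fun x => Real.log (Real.cos x)) volume 0 (π/2) := by
  have := (ii_logsin.comp_sub_left (π/2)).symm
  simp only [Real.sin_pi_div_two_sub, sub_zero, sub_self] at this
  exact this

lemma ii_logsin2 : IntervalIntegrable (fun x => Real.log (Real.sin x)) volume (π/2) π := by
  have := (ii_logsin.comp_sub_left π).symm
  simp only [Real.sin_pi_sub, sub_zero] at this
  have h : π - π/2 = π/2 := by ring
  rw [h] at this
  exact this

/-! ### The classical integral `∫₀^{π/2} log (sin x) = -(π/2) log 2` -/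

lemma integral_log_sin : ∫ x in (0:ℝ)..(π/2), Real.log (Real.sin x) = -(π/2) * Real.log 2 := by
  set I := ∫ x in (0:ℝ)..(π/2), Real.log (Real.sin x) with hIdef
  have hcos : ∫ x in (0:ℝ)..(π/2), Real.log (Real.cos x) = I := by
    have : ∫ x in (0:ℝ)..(π/2), Real.log (Real.cos x)
        = ∫ x in (0:ℝ)..(π/2), Real.log (Real.sin (π/2 - x)) := by
      simp [Real.sin_pi_div_two_sub]
    rw [this, intervalIntegral.integral_comp_sub_left (fun x => Real.log (Real.sin x)) (π/2)]
    norm_num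
    rfl
  have hsub2 : ∫ x in (π/2:ℝ)..π, Real.log (Real.sin x) = I := by
    have h := intervalIntegral.integral_comp_sub_left (fun x => Real.log (Real.sin x)) π
      (a := 0) (b := π/2)
    simp only [Real.sin_pi_sub, sub_zero] at h
    have h2 : π - π/2 = π/2 := by ring
    rw [h2] at h
    exact h.symm
  have hpi : ∫ x in (0:ℝ)..π, Real.log (Real.sin x) = 2 * I := by
    rw [← intervalIntegral.integral_add_adjacent_intervals ii_logsin ii_logsin2, hsub2]
    ring_nf
    rw [hIdef]
    ring
  have hdouble : ∫ x in (0:ℝ)..(π/2), Real.log (Real.sin (2*x)) = I := by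
    rw [intervalIntegral.integral_comp_mul_left (fun x => Real.log (Real.sin x)) two_ne_zero]
    norm_num
    rw [show (2:ℝ)*(π/2) = π by ring, hpi]
    ring
  have ii2x : IntervalIntegrable (fun x => Real.log (Real.sin (2*x))) volume 0 (π/2) := by
    have := (ii_logsin.trans ii_logsin2).comp_mul_left (c := 2)
    norm_num at this
    exact this
  have key : I + I = I - (π/2) * Real.log 2 := by
    have hadd : I + I
        = ∫ x in (0:ℝ)..(π/2), (Real.log (Real.sin x) + Real.log (Real.cos x)) := by
      rw [intervalIntegral.integral_add ii_logsin ii_logcos, hcos]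
    have hcongr : ∫ x in (0:ℝ)..(π/2), (Real.log (Real.sin x) + Real.log (Real.cos x))
        = ∫ x in (0:ℝ)..(π/2), (Real.log (Real.sin (2*x)) - Real.log 2) := by
      rw [intervalIntegral.integral_of_le (by positivity : (0:ℝ) ≤ π/2),
        intervalIntegral.integral_of_le (by positivity : (0:ℝ) ≤ π/2),
        MeasureTheory.integral_Ioc_eq_integral_Ioo,
        MeasureTheory.integral_Ioc_eq_integral_Ioo]
      apply MeasureTheory.setIntegral_congr_fun measurableSet_Ioo
      intro x hx
      show Real.log (Real.sin x) + Real.log (Real.cos x) = Real.log (Real.sin (2*x)) - Real.log 2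
      have hs : 0 < Real.sin x := Real.sin_pos_of_pos_of_lt_pi hx.1
        (by nlinarith [hx.2, pi_pos])
      have hc : 0 < Real.cos x := Real.cos_pos_of_mem_Ioo
        ⟨by linarith [hx.1, pi_pos], hx.2⟩
      have h2x : Real.sin (2*x) = 2 * (Real.sin x * Real.cos x) := by
        rw [Real.sin_two_mul]; ring
      rw [h2x, Real.log_mul (by norm_num) (by positivity),
        Real.log_mul hs.ne' hc.ne']
      ring
    have hsubst : ∫ x in (0:ℝ)..(π/2), (Real.log (Real.sin (2*x)) - Real.log 2)
        = I - (π/2) * Real.log 2 := by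
      rw [intervalIntegral.integral_sub ii2x intervalIntegrable_const, hdouble,
        intervalIntegral.integral_const]
      simp [smul_eq_mul]
    rw [hadd, hcongr, hsubst]
  linarith

/-! ### `∫_{Iio 0} log (1+t²)/(1+t²) = π log 2` via `t = tan θ` -/

lemma tan_image_Ioo : Real.tan '' (Set.Ioo (-(π/2)) 0) = Set.Iio (0:ℝ) := by
  ext y
  constructor
  · rintro ⟨x, hx, rfl⟩
    have hc : 0 < Real.cos x := Real.cos_pos_of_mem_Ioo ⟨hx.1, by linarith [hx.2, pi_pos]⟩
    have hs : Real.sin x < 0 := Real.sin_neg_of_neg_of_neg_pi_lt hx.2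
      (by nlinarith [hx.1, pi_pos])
    rw [Set.mem_Iio, Real.tan_eq_sin_div_cos]
    exact div_neg_of_neg_of_pos hs hc
  · intro hy
    refine ⟨Real.arctan y, ⟨Real.neg_pi_div_two_lt_arctan y, ?_⟩, Real.tan_arctan y⟩
    have : Real.arctan y < Real.arctan 0 := Real.arctan_strictMono hy
    simpa using this

lemma hasDerivWithinAt_tan_Ioo : ∀ x ∈ Set.Ioo (-(π/2)) 0,
    HasDerivWithinAt Real.tan (1 / Real.cos x ^ 2) (Set.Ioo (-(π/2)) 0) x := by
  intro x hx
  have hc : 0 < Real.cos x := Real.cos_pos_of_mem_Ioo ⟨hx.1, by linarith [hx.2, pi_pos]⟩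
  exact (Real.hasDerivAt_tan hc.ne').hasDerivWithinAt

lemma injOn_tan_Ioo : Set.InjOn Real.tan (Set.Ioo (-(π/2)) 0) :=
  Real.injOn_tan.mono (Set.Ioo_subset_Ioo le_rfl (by positivity))

lemma integrand_eq : ∀ x ∈ Set.Ioo (-(π/2)) 0,
    |1 / Real.cos x ^ 2| • (Real.log (1 + (Real.tan x)^2) / (1 + (Real.tan x)^2))
      = -2 * Real.log (Real.cos x) := by
  intro x hx
  have hc : 0 < Real.cos x := Real.cos_pos_of_mem_Ioo ⟨hx.1, by linarith [hx.2, pi_pos]⟩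
  have h1 : 1 + Real.tan x ^ 2 = (Real.cos x ^ 2)⁻¹ := by
    rw [← Real.inv_one_add_tan_sq hc.ne', inv_inv]
  rw [h1, smul_eq_mul, abs_of_pos (by positivity), Real.log_inv, Real.log_pow]
  field_simp
  push_cast
  ring

lemma integrableOn_logcos : IntegrableOn (fun x => -2 * Real.log (Real.cos x))
    (Set.Ioo (-(π/2)) 0) := by
  have h1 : IntervalIntegrable (fun x => Real.log (Real.cos x)) volume (-(π/2)) 0 := by
    have := ((IntervalIntegrable.iff_comp_neg (a := 0) (b := π/2)).mp ii_logcos)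
    simp only [Real.cos_neg, neg_zero] at this
    exact this.symm
  have h2 : IntegrableOn (fun x => Real.log (Real.cos x)) (Set.Ioc (-(π/2)) 0) :=
    (intervalIntegrable_iff_integrableOn_Ioc_of_le (by linarith [pi_pos])).mp h1
  exact ((h2.mono_set Set.Ioo_subset_Ioc_self).const_mul (-2))

lemma integral_logcos : ∫ x in Set.Ioo (-(π/2)) 0, Real.log (Real.cos x)
    = -(π/2) * Real.log 2 := by
  have h0 : ∫ x in Set.Ioo (-(π/2)) 0, Real.log (Real.cos x)
      = ∫ x in (-(π/2):ℝ)..0, Real.log (Real.cos x) := by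
    rw [intervalIntegral.integral_of_le (by linarith [pi_pos]),
      MeasureTheory.integral_Ioc_eq_integral_Ioo]
  rw [h0]
  have h1 : ∫ x in (0:ℝ)..(π/2), Real.log (Real.cos (-x))
      = ∫ x in (-(π/2):ℝ)..0, Real.log (Real.cos x) := by
    have := intervalIntegral.integral_comp_neg (a := 0) (b := π/2)
      (fun x => Real.log (Real.cos x))
    simpa using this
  rw [← h1]
  simp only [Real.cos_neg]
  calc ∫ x in (0:ℝ)..(π/2), Real.log (Real.cos x)
      = ∫ x in (0:ℝ)..(π/2), Real.log (Real.sin x) := by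
        have : ∫ x in (0:ℝ)..(π/2), Real.log (Real.cos x)
            = ∫ x in (0:ℝ)..(π/2), Real.log (Real.sin (π/2 - x)) := by
          simp [Real.sin_pi_div_two_sub]
        rw [this, intervalIntegral.integral_comp_sub_left (fun x => Real.log (Real.sin x)) (π/2)]
        norm_num
    _ = -(π/2) * Real.log 2 := integral_log_sin

lemma integral_g_Iio : ∫ t in Set.Iio (0:ℝ), Real.log (1 + t^2) / (1 + t^2)
    = π * Real.log 2 := by
  rw [← tan_image_Ioo,
    MeasureTheory.integral_image_eq_integral_abs_deriv_smul measurableSet_Ioo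
      hasDerivWithinAt_tan_Ioo injOn_tan_Ioo]
  rw [MeasureTheory.setIntegral_congr_fun measurableSet_Ioo integrand_eq]
  rw [MeasureTheory.integral_const_mul, integral_logcos]
  ring

lemma integrableOn_g_Iio : IntegrableOn (fun t => Real.log (1 + t^2) / (1 + t^2))
    (Set.Iio (0:ℝ)) := by
  rw [← tan_image_Ioo,
    MeasureTheory.integrableOn_image_iff_integrableOn_abs_deriv_smul measurableSet_Ioo
      hasDerivWithinAt_tan_Ioo injOn_tan_Ioo]
  exact (integrableOn_logcos.congr_fun (fun x hx => (integrand_eq x hx).symm) measurableSet_Ioo)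

lemma integrableOn_g_Iic : IntegrableOn (fun t => Real.log (1 + t^2) / (1 + t^2))
    (Set.Iic (0:ℝ)) :=
  (integrableOn_Iic_iff_integrableOn_Iio).mpr integrableOn_g_Iio

lemma integral_g_Iic : ∫ t in Set.Iic (0:ℝ), Real.log (1 + t^2) / (1 + t^2)
    = π * Real.log 2 := by
  rw [MeasureTheory.integral_Iic_eq_integral_Iio]
  exact integral_g_Iio

/-! ### Auxiliary facts about `arctan` -/

lemma arctan_bound {s : ℝ} (hs : s ≤ -1) : 0 ≤ π/2 + Real.arctan s ∧ π/2 + Real.arctan s ≤ -s⁻¹ := by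
  have hs0 : s < 0 := by linarith
  have harct : Real.arctan s⁻¹ = -(π/2) - Real.arctan s := Real.arctan_inv_of_neg hs0
  have hkey : π/2 + Real.arctan s = Real.arctan (-s⁻¹) := by
    rw [Real.arctan_neg, harct]; ring
  have hpos : 0 ≤ -s⁻¹ := by
    rw [neg_nonneg]
    exact (inv_nonpos).mpr hs0.le
  constructor
  · rw [hkey]; exact my_arctan_nonneg hpos
  · rw [hkey]
    rcases eq_or_lt_of_le hpos with h | h
    · simp [← h]
    · have h1 : Real.arctan (-s⁻¹) < π/2 := Real.arctan_lt_pi_div_two _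
      have := Real.le_tan (my_arctan_nonneg hpos) (Real.arctan_lt_pi_div_two _)
      rwa [Real.tan_arctan] at this

/-! ### Main theorem -/

theorem stmt1 :
    ∫ s in Set.Iic (0 : ℝ), (π / 2 + Real.arctan s) ^ 2 = π * Real.log 2 := by
  set g : ℝ → ℝ := fun t => Real.log (1 + t^2) / (1 + t^2) with hg
  have gcont : Continuous g := by
    apply Continuous.div
    · exact (continuous_const.add (continuous_pow 2)).log (fun x => by simp only [Pi.add_apply]; positivity)
    · exact continuous_const.add (continuous_pow 2)
    · intro x; positivity
  set F : ℝ → ℝ := fun s => s * (π/2 + Real.arctan s)^2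
      - (π/2 + Real.arctan s) * Real.log (1 + s^2) + ∫ t in (0:ℝ)..s, g t with hF
  have hderivF : ∀ s : ℝ, HasDerivAt F ((π/2 + Real.arctan s)^2) s := by
    intro s
    have h1 : HasDerivAt (fun s => π/2 + Real.arctan s) (1/(1+s^2)) s :=
      (Real.hasDerivAt_arctan s).const_add (π/2)
    have h2 : HasDerivAt (fun s : ℝ => s * (π/2 + Real.arctan s)^2)
        (1 * (π/2 + Real.arctan s)^2 + s * (2 * (π/2 + Real.arctan s)^(2-1) * (1/(1+s^2)))) s :=
      (hasDerivAt_id s).mul (h1.pow 2)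
    have h3 : HasDerivAt (fun s : ℝ => Real.log (1 + s^2)) (2*s/(1+s^2)) s := by
      have hin : HasDerivAt (fun s : ℝ => 1 + s^2) (2*s) s := by
        simpa using ((hasDerivAt_pow 2 s).const_add 1)
      have := hin.log (by positivity : (1:ℝ) + s^2 ≠ 0)
      simpa using this
    have h4 : HasDerivAt (fun s : ℝ => (π/2 + Real.arctan s) * Real.log (1 + s^2))
        ((1/(1+s^2)) * Real.log (1 + s^2) + (π/2 + Real.arctan s) * (2*s/(1+s^2))) s :=
      h1.mul h3
    have h5 : HasDerivAt (fun u : ℝ => ∫ t in (0:ℝ)..u, g t) (g s) s :=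
      intervalIntegral.integral_hasDerivAt_right (gcont.intervalIntegrable 0 s)
        (gcont.stronglyMeasurableAtFilter _ _) gcont.continuousAt
    have := (h2.sub h4).add h5
    refine this.congr_deriv ?_
    have hne : (1:ℝ) + s^2 ≠ 0 := by positivity
    rw [hg]
    field_simp
    ring
  have hint : IntegrableOn (fun s : ℝ => (π/2 + Real.arctan s)^2) (Set.Iic (0:ℝ)) := by
    have hsplit : Set.Iic (0:ℝ) = Set.Iic (-1) ∪ Set.Ioc (-1) 0 :=
      (Set.Iic_union_Ioc_eq_Iic (by norm_num)).symm
    rw [hsplit]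
    apply IntegrableOn.union
    · -- on Iic (-1), dominate by s⁻² which is integrable
      have hmaj : IntegrableOn (fun s : ℝ => (s⁻¹)^2) (Set.Iic (-1:ℝ)) := by
        have hemb : MeasurableEmbedding (fun x : ℝ => -x) :=
          (Homeomorph.neg ℝ).isClosedEmbedding.measurableEmbedding
        have hpre : (fun x : ℝ => -x) ⁻¹' (Set.Iic (-1:ℝ)) = Set.Ici (1:ℝ) := by
          ext x; simp [le_neg]
        have hmap : volume.restrict (Set.Iic (-1:ℝ))
            = Measure.map (fun x : ℝ => -x) (volume.restrict (Set.Ici (1:ℝ))) := by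
          conv_lhs => rw [← Measure.map_neg_eq_self (volume : Measure ℝ)]
          rw [Measure.restrict_map hemb.measurable measurableSet_Iic, hpre]
        rw [IntegrableOn, hmap, hemb.integrable_map_iff]
        have hr : IntegrableOn (fun x : ℝ => x ^ (-2:ℝ)) (Set.Ioi (1:ℝ)) :=
          integrableOn_Ioi_rpow_of_lt (by norm_num) one_pos
        have : IntegrableOn (fun x : ℝ => (x⁻¹)^2) (Set.Ioi (1:ℝ)) := by
          apply hr.congr_fun _ measurableSet_Ioi
          intro x hx
          have hx0 : (0:ℝ) < x := lt_trans one_pos hx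
          show x ^ (-2:ℝ) = (x⁻¹)^2
          rw [show ((-2):ℝ) = -((2:ℕ):ℝ) by norm_num, Real.rpow_neg hx0.le,
            Real.rpow_natCast, inv_pow]
        have h2 : IntegrableOn (fun x : ℝ => (x⁻¹)^2) (Set.Ici (1:ℝ)) :=
          (integrableOn_Ici_iff_integrableOn_Ioi).mpr this
        apply h2.congr_fun _ measurableSet_Ici
        intro x _
        show (x⁻¹)^2 = ((-x)⁻¹)^2
        rw [inv_neg]
        ring
      refine Integrable.mono' hmaj ?_ ?_
      · apply Continuous.aestronglyMeasurable
        continuity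
      · filter_upwards [ae_restrict_mem measurableSet_Iic] with s hs
        have hb := arctan_bound hs
        have hs0 : s < 0 := by linarith [hs.out]
        rw [Real.norm_eq_abs, abs_of_nonneg (by positivity)]
        have h1 : (π/2 + Real.arctan s)^2 ≤ (-s⁻¹)^2 := by
          apply sq_le_sq' (by linarith [hb.1, hb.2]) hb.2
        calc (π/2 + Real.arctan s)^2 ≤ (-s⁻¹)^2 := h1
          _ = (s⁻¹)^2 := by ring
    · apply Continuous.integrableOn_Ioc
      continuity
  have hF0 : F 0 = 0 := by
    simp [hF]
  -- limits at -∞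
  have hT1 : Tendsto (fun s : ℝ => s * (π/2 + Real.arctan s)^2) atBot (𝓝 0) := by
    have hg0 : Tendsto (fun s : ℝ => (-s)⁻¹) atBot (𝓝 0) :=
      tendsto_inv_atTop_zero.comp tendsto_neg_atBot_atTop
    apply squeeze_zero_norm' _ hg0
    filter_upwards [eventually_le_atBot (-1:ℝ)] with s hs
    have hb := arctan_bound hs
    have hs0 : s < 0 := by linarith
    rw [Real.norm_eq_abs, abs_mul, abs_of_neg hs0, abs_of_nonneg (by positivity)]
    have h1 : (π/2 + Real.arctan s)^2 ≤ (s⁻¹)^2 := by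
      have := sq_le_sq' (by linarith [hb.1, hb.2]) hb.2
      calc (π/2 + Real.arctan s)^2 ≤ (-s⁻¹)^2 := this
        _ = (s⁻¹)^2 := by ring
    have : -s * (π/2 + Real.arctan s)^2 ≤ -s * (s⁻¹)^2 := by
      apply mul_le_mul_of_nonneg_left h1 (by linarith)
    calc -s * (π/2 + Real.arctan s)^2 ≤ -s * (s⁻¹)^2 := this
      _ = (-s)⁻¹ := by
          field_simp
  have hT2 : Tendsto (fun s : ℝ => (π/2 + Real.arctan s) * Real.log (1 + s^2)) atBot (𝓝 0) := by
    have hinner : Tendsto (fun x : ℝ => (Real.log 2 + 2 * Real.log x) / x) atTop (𝓝 0) := by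
      have h1 : Tendsto (fun x : ℝ => Real.log 2 / x) atTop (𝓝 0) :=
        tendsto_const_nhds.div_atTop tendsto_id
      have h2 : Tendsto (fun x : ℝ => Real.log x / x) atTop (𝓝 0) := by
        have := Real.isLittleO_log_id_atTop.tendsto_div_nhds_zero
        simpa using this
      have := h1.add ((h2.const_mul 2))
      simp only [add_zero, mul_zero] at this
      convert this using 2 with x
      ring
    have hg0 : Tendsto (fun s : ℝ => (Real.log 2 + 2 * Real.log (-s)) / (-s)) atBot (𝓝 0) :=
      hinner.comp tendsto_neg_atBot_atTop
    apply squeeze_zero_norm' _ hg0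
    filter_upwards [eventually_le_atBot (-1:ℝ)] with s hs
    have hb := arctan_bound hs
    have hs0 : s < 0 := by linarith
    have hlog1 : 0 ≤ Real.log (1 + s^2) := by
      apply Real.log_nonneg; nlinarith
    rw [Real.norm_eq_abs, abs_mul, abs_of_nonneg hb.1, abs_of_nonneg hlog1]
    have hlog2 : Real.log (1 + s^2) ≤ Real.log 2 + 2 * Real.log (-s) := by
      have h1 : (1:ℝ) + s^2 ≤ 2 * (-s)^2 := by nlinarith
      have h2 : Real.log (1 + s^2) ≤ Real.log (2 * (-s)^2) :=
        Real.log_le_log (by positivity) h1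
      rwa [Real.log_mul (by norm_num) (pow_ne_zero 2 (by linarith : -s ≠ 0)), Real.log_pow,
        Nat.cast_ofNat] at h2
    have hA : π/2 + Real.arctan s ≤ (-s)⁻¹ := by
      rw [← neg_inv]; exact hb.2
    calc (π/2 + Real.arctan s) * Real.log (1 + s^2)
        ≤ (-s)⁻¹ * (Real.log 2 + 2 * Real.log (-s)) := by
          apply mul_le_mul hA hlog2 hlog1 (inv_nonneg.mpr (by linarith))
      _ = (Real.log 2 + 2 * Real.log (-s)) / (-s) := by
          rw [div_eq_mul_inv]; ring
  have hT3 : Tendsto (fun s : ℝ => ∫ t in (0:ℝ)..s, g t) atBot (𝓝 (-(π * Real.log 2))) := by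
    have h1 : Tendsto (fun s : ℝ => ∫ t in s..(0:ℝ), g t) atBot
        (𝓝 (∫ t in Set.Iic (0:ℝ), g t)) :=
      MeasureTheory.intervalIntegral_tendsto_integral_Iic 0 integrableOn_g_Iic tendsto_id
    rw [show (∫ t in Set.Iic (0:ℝ), g t) = π * Real.log 2 from integral_g_Iic] at h1
    have := h1.neg
    apply this.congr
    intro s
    rw [← intervalIntegral.integral_symm]
  have hlim : Tendsto F atBot (𝓝 (-(π * Real.log 2))) := by
    have := (hT1.sub hT2).add hT3
    simp only [sub_zero, zero_add, sub_self, zero_sub] at this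
    exact this
  rw [MeasureTheory.integral_Iic_of_hasDerivAt_of_tendsto'
    (fun x _ => hderivF x) hint hlim, hF0]
  ring
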